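/- Let G be a digraph on a finite vertex set V such that every vertex of V is reachable from every other (G is strongly connected), let r ∈ V, and let h ∈ ℕ. Then for all u, v ∈ V, d_G(u, v) ≤ 2h + |{x ∈ V : d_G(x, r) > h}| + |{x ∈ V : d_G(r, x) > h}|. -/

import Mathlib

variable {V : Type*}

/-- Unweighted walk distance in the digraph with edge relation `E`:
the minimum number of edges of a walk from `u` to `v`, `∞` if none exists. -/
noncomputable def ddist (E : V → V → Prop) (u v : V) : ℕ∞ :=
  sInf { n : ℕ∞ | ∃ l : List V, l.Chain' E ∧ l.head? = some u ∧ l.getLast? = some v ∧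
    n = ((l.length - 1 : ℕ) : ℕ∞) }

/-- Weighted walk distance: the minimum total weight of a walk from `u` to `v`. -/
noncomputable def wdist (E : V → V → Prop) (w : V → V → ℕ) (u v : V) : ℕ∞ :=
  sInf { n : ℕ∞ | ∃ l : List V, l.Chain' E ∧ l.head? = some u ∧ l.getLast? = some v ∧
    n = ((((l.zip l.tail).map fun p => w p.1 p.2).sum : ℕ) : ℕ∞) }

/-- The digraph `H ∖ E(S)`: edges of `E` with neither endpoint in `S`. -/
def edgesAvoiding (E : V → V → Prop) (S : Set V) : V → V → Prop :=
  fun a b => E a b ∧ a ∉ S ∧ b ∉ S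

/-- The strongly connected component of `v`: vertices mutually reachable with `v`. -/
def scc (E : V → V → Prop) (v : V) : Set V :=
  {u | Relation.ReflTransGen E u v ∧ Relation.ReflTransGen E v u}

/-- `S` is a `q`-quality separator: every SCC of `H ∖ E(S)` has at most `|V| - q·|S|` vertices. -/
def QualSep [Fintype V] (E : V → V → Prop) (q : ℝ) (S : Set V) : Prop :=
  ∀ v : V, ((scc (edgesAvoiding E S) v).ncard : ℝ) ≤ (Fintype.card V : ℝ) - q * S.ncard

/-- Edge relation of the induced subdigraph on `C`. -/
def induced (E : V → V → Prop) (C : Set V) : V → V → Prop :=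
  fun a b => E a b ∧ a ∈ C ∧ b ∈ C

/-- The (finite) collection of vertex sets of the SCCs of the digraph. -/
noncomputable def sccs [Fintype V] (E : V → V → Prop) : Finset (Set V) :=
  letI := Classical.decEq (Set V)
  Finset.image (fun v => scc E v) Finset.univ

section aux

variable {V : Type*}

private lemma walk_ne_nil {l : List V} {u : V} (hh : l.head? = some u) : l ≠ [] := by
  intro he; simp [he] at hh

private lemma ddist_le_walk (E : V → V → Prop) {u v : V} {l : List V}
    (hc : l.Chain' E) (hh : l.head? = some u) (hl : l.getLast? = some v) :
    ddist E u v ≤ ((l.length - 1 : ℕ) : ℕ∞) :=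
  sInf_le ⟨l, hc, hh, hl, rfl⟩

private lemma ddist_ne_top {E : V → V → Prop} {u v : V} (h : Relation.ReflTransGen E u v) :
    ddist E u v ≠ ⊤ := by
  obtain ⟨l, hc, hl⟩ := List.exists_isChain_cons_of_relationReflTransGen h
  have hlast : (u :: l).getLast? = some v := by
    rw [List.getLast?_eq_getLast (List.cons_ne_nil _ _), hl]
  have hle := ddist_le_walk E (l := u :: l) hc rfl hlast
  exact ne_top_of_le_ne_top (by simp) hle

private lemma ddist_spec {E : V → V → Prop} {u v : V} (hne : ddist E u v ≠ ⊤) :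
    ∃ l : List V, l.Chain' E ∧ l.head? = some u ∧ l.getLast? = some v ∧
      ddist E u v = ((l.length - 1 : ℕ) : ℕ∞) := by
  have hne' : { n : ℕ∞ | ∃ l : List V, l.Chain' E ∧ l.head? = some u ∧ l.getLast? = some v ∧
      n = ((l.length - 1 : ℕ) : ℕ∞) }.Nonempty := by
    by_contra hcon
    rw [Set.not_nonempty_iff_eq_empty] at hcon
    apply hne
    show sInf _ = ⊤
    rw [hcon, sInf_empty]
  obtain ⟨l, hc, hh, hl, he⟩ := csInf_mem hne'
  exact ⟨l, hc, hh, hl, he⟩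

private lemma walk_append {E : V → V → Prop} {u x v : V} {l₁ l₂ : List V}
    (hc1 : l₁.Chain' E) (h1h : l₁.head? = some u) (h1l : l₁.getLast? = some x)
    (hc2 : l₂.Chain' E) (h2h : l₂.head? = some x) (h2l : l₂.getLast? = some v) :
    ∃ l : List V, l.Chain' E ∧ l.head? = some u ∧ l.getLast? = some v ∧
      l.length - 1 = (l₁.length - 1) + (l₂.length - 1) := by
  have h1ne : l₁ ≠ [] := walk_ne_nil h1h
  have h1len : 1 ≤ l₁.length := List.length_pos_iff.mpr h1ne
  obtain ⟨y, t, rfl⟩ : ∃ y t, l₂ = y :: t := by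
    cases l₂ with
    | nil => simp at h2h
    | cons a b => exact ⟨a, b, rfl⟩
  have hxy : y = x := by simpa using h2h
  cases t with
  | nil =>
    have hyv : y = v := by simpa using h2l
    refine ⟨l₁, hc1, h1h, ?_, by simp⟩
    rw [h1l, show x = v from hxy ▸ hyv]
  | cons z t' =>
    have h2l' : (z :: t').getLast? = some v := by
      rwa [List.getLast?_cons_cons] at h2l
    refine ⟨l₁ ++ z :: t', ?_, ?_, ?_, ?_⟩
    · show List.IsChain _ _; rw [List.isChain_append]
      refine ⟨hc1, hc2.tail, ?_⟩
      intro a ha b hb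
      rw [h1l, Option.mem_def, Option.some_inj] at ha
      simp only [List.head?_cons, Option.mem_def, Option.some_inj] at hb
      subst ha; subst hb
      rw [← hxy]
      exact (List.isChain_cons_cons.mp hc2).1
    · rw [List.head?_append, h1h]; rfl
    · rw [List.getLast?_append, h2l']; rfl
    · simp only [List.length_append, List.length_cons]
      omega

private lemma ddist_triangle (E : V → V → Prop) (u x v : V) :
    ddist E u v ≤ ddist E u x + ddist E x v := by
  by_cases h1 : ddist E u x = ⊤
  · simp [h1]
  by_cases h2 : ddist E x v = ⊤
  · simp [h2]
  obtain ⟨l₁, hc1, h1h, h1l, he1⟩ := ddist_spec h1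
  obtain ⟨l₂, hc2, h2h, h2l, he2⟩ := ddist_spec h2
  obtain ⟨l, hc, hh, hl, hlen⟩ := walk_append hc1 h1h h1l hc2 h2h h2l
  calc ddist E u v ≤ ((l.length - 1 : ℕ) : ℕ∞) := ddist_le_walk E hc hh hl
    _ = ddist E u x + ddist E x v := by rw [hlen, he1, he2, Nat.cast_add]

private lemma ddist_flip_le (E : V → V → Prop) (u v : V) :
    ddist E v u ≤ ddist (fun a b => E b a) u v := by
  apply sInf_le_sInf
  rintro n ⟨l, hc, hh, hl, rfl⟩
  refine ⟨l.reverse, ?_, by simpa using hl, by simpa using hh, by simp⟩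
  show List.IsChain _ _; rw [List.isChain_reverse]
  exact hc

private lemma ddist_flip (E : V → V → Prop) (u v : V) :
    ddist (fun a b => E b a) u v = ddist E v u :=
  le_antisymm (ddist_flip_le (fun a b => E b a) v u) (ddist_flip_le E u v)

/-- On a shortest walk from `u` to `r`, for every `k ≤ d(u,r)` there is a vertex at
distance exactly `k` from `r`. -/
private lemma exists_vertex_at_dist {E : V → V → Prop} {u r : V} {n : ℕ}
    (hd : ddist E u r = (n : ℕ∞)) {k : ℕ} (hk : k ≤ n) :
    ∃ x : V, ddist E x r = (k : ℕ∞) := by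
  obtain ⟨l, hc, hh, hl, he⟩ := ddist_spec (show ddist E u r ≠ ⊤ by simp [hd])
  have hn : l.length - 1 = n := by
    have := hd.symm.trans he
    exact_mod_cast (Nat.cast_inj.mp this).symm
  have hlpos : 1 ≤ l.length := List.length_pos_iff.mpr (walk_ne_nil hh)
  obtain ⟨p, hp⟩ : ∃ p, p = n - k := ⟨_, rfl⟩
  have hpl : p < l.length := by omega
  set x := l.get ⟨p, hpl⟩ with hx
  have hxg : l[p]? = some x := by
    rw [List.getElem?_eq_getElem hpl]; rfl
  -- suffix walk : x to r with k edges
  have hsuf : ddist E x r ≤ (k : ℕ∞) := by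
    have h1 : (l.drop p).head? = some x := by rw [List.head?_drop]; exact hxg
    have h2 : (l.drop p).getLast? = some r := by
      rw [List.getLast?_drop, if_neg (by omega)]; exact hl
    have := ddist_le_walk E (hc.drop p) h1 h2
    rwa [List.length_drop, show l.length - p - 1 = k by omega] at this
  -- prefix walk : u to x with p edges
  have hpre : ddist E u x ≤ (p : ℕ∞) := by
    have h1 : (l.take (p + 1)).head? = some u := by
      rw [List.head?_take, if_neg (by omega)]; exact hh
    have h2 : (l.take (p + 1)).getLast? = some x := by
      rw [List.getLast?_take, if_neg (by omega)]
      simp only [Nat.add_sub_cancel, hxg, Option.some_or]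
    have := ddist_le_walk E (hc.take (p + 1)) h1 h2
    rwa [List.length_take, show min (p + 1) l.length - 1 = p by omega] at this
  -- lower bound via triangle
  have htri := ddist_triangle E u x r
  have hxr_ne : ddist E x r ≠ ⊤ := ne_top_of_le_ne_top (by simp) hsuf
  lift ddist E x r to ℕ using hxr_ne with m hm
  have hux_ne : ddist E u x ≠ ⊤ := ne_top_of_le_ne_top (by simp) hpre
  lift ddist E u x to ℕ using hux_ne with q hq
  rw [hd] at htri
  have h1 : n ≤ q + m := by exact_mod_cast htri
  have h2 : q ≤ p := by exact_mod_cast hpre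
  have h3 : m ≤ k := by exact_mod_cast hsuf
  have hmk : m = k := by omega
  exact ⟨x, by rw [← hm, hmk]⟩

private lemma ddist_le_card [Fintype V] {E : V → V → Prop}
    (hsc : ∀ u v : V, Relation.ReflTransGen E u v) (r : V) (h : ℕ) (u : V) :
    ddist E u r ≤ ((h + {x : V | (h : ℕ∞) < ddist E x r}.ncard : ℕ) : ℕ∞) := by
  have hne := ddist_ne_top (hsc u r)
  lift ddist E u r to ℕ using hne with n hn
  rw [Nat.cast_le]
  by_contra hcon
  push_neg at hcon
  have hchoice : ∀ i : Fin (n - h), ∃ x : V, ddist E x r = ((h + 1 + i : ℕ) : ℕ∞) := by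
    intro i
    exact exists_vertex_at_dist hn.symm (by omega)
  choose f hf using hchoice
  have hfA : ∀ i, f i ∈ {x : V | (h : ℕ∞) < ddist E x r} := by
    intro i
    rw [Set.mem_setOf_eq, hf]
    exact Nat.cast_lt.mpr (by omega)
  have hinj : Function.Injective
      (fun i : Fin (n - h) => (⟨f i, hfA i⟩ : {x : V | (h : ℕ∞) < ddist E x r})) := by
    intro i j hij
    simp only [Subtype.mk.injEq] at hij
    have heq : ddist E (f i) r = ddist E (f j) r := by rw [hij]
    rw [hf, hf, Nat.cast_inj] at heq
    exact Fin.ext (by omega)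
  have hcard := Nat.card_le_card_of_injective _ hinj
  rw [Nat.card_eq_fintype_card, Fintype.card_fin, Nat.card_coe_set_eq] at hcard
  omega

end aux

/-- diameter bound for a strongly connected digraph via an in-tree and
an out-tree of depth `h` rooted at `r`. -/
theorem stmt17 {V : Type*} [Fintype V] (E : V → V → Prop)
    (hsc : ∀ u v : V, Relation.ReflTransGen E u v) (r : V) (h : ℕ) :
    ∀ u v : V,
      ddist E u v ≤
        ((2 * h + {x : V | (h : ℕ∞) < ddist E x r}.ncard
          + {x : V | (h : ℕ∞) < ddist E r x}.ncard : ℕ) : ℕ∞) := by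
  intro u v
  have h1 := ddist_le_card hsc r h u
  have h2 : ddist E r v ≤ ((h + {x : V | (h : ℕ∞) < ddist E r x}.ncard : ℕ) : ℕ∞) := by
    have hsc' : ∀ a b : V, Relation.ReflTransGen (fun a b => E b a) a b := fun a b =>
      (hsc b a).swap
    have hset : {x : V | (h : ℕ∞) < ddist (fun a b => E b a) x r}
        = {x : V | (h : ℕ∞) < ddist E r x} := by
      ext x; simp [ddist_flip]
    have := ddist_le_card hsc' r h v
    rwa [ddist_flip, hset] at this
  calc ddist E u v ≤ ddist E u r + ddist E r v := ddist_triangle E u r v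
    _ ≤ _ := by
        refine le_trans (add_le_add h1 h2) ?_
        push_cast
        ring_nf
        exact le_refl _
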